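/- arXiv:2507.21543 — 2 statements merged into one kernel-verified Lean document; each statement's English description precedes it below -/
import Mathlib

section
/- For every k ∈ {0,…,T−1}, the matrices Σ_{Q_k} = ε (R_k + B_kᵀ Π_{k+1} B_k)^{−1} satisfy the Loewner-order bounds Σ̂_{Q_k} ⪰ Σ_{Q_k} ⪰ Σ̌_{Q_k} ≻ 0, where Σ̂_{Q_k} = ε (R_k + B_kᵀ Π̌_{k+1} B_k)^{−1} and Σ̌_{Q_k} = ε (R_k + B_kᵀ Π̂_{k+1} B_k)^{−1}; in particular these bounds are independent of the covariances Σ_{ρ_0},…,Σ_{ρ_{T−1}}. -/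
open Matrix Filter Topology

/-- The unique symmetric positive semidefinite square root of a positive
semidefinite real matrix (junk value `0` if the matrix is not PSD). -/
noncomputable def msqrt {d : ℕ} (X : Matrix (Fin d) (Fin d) ℝ) :
    Matrix (Fin d) (Fin d) ℝ :=
  letI := Classical.propDecidable X.PosSemidef
  if h : X.PosSemidef then
    h.1.eigenvectorUnitary.1 * diagonal ((↑) ∘ (√·) ∘ h.1.eigenvalues) *
      (star h.1.eigenvectorUnitary : Matrix (Fin d) (Fin d) ℝ)
  else 0

/-- The Frobenius norm of a real square matrix. -/
noncomputable def frob {d : ℕ} (X : Matrix (Fin d) (Fin d) ℝ) : ℝ :=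
  Real.sqrt (∑ i, ∑ j, X i j ^ 2)

/-- Data of the mutual information optimal control problem for a discrete-time
linear system `x_{k+1} = A_k x_k + B_k u_k + w_k`. -/
structure LQData (n m : ℕ) where
  ε : ℝ
  A : ℕ → Matrix (Fin n) (Fin n) ℝ
  B : ℕ → Matrix (Fin n) (Fin m) ℝ
  R : ℕ → Matrix (Fin m) (Fin m) ℝ
  F : Matrix (Fin n) (Fin n) ℝ
  Sw : ℕ → Matrix (Fin n) (Fin n) ℝ
  Sini : Matrix (Fin n) (Fin n) ℝ

namespace LQData

variable {n m : ℕ} (P : LQData n m) (T : ℕ) (Srho : ℕ → Matrix (Fin m) (Fin m) ℝ)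

/-- The backward Riccati recursion `Π_k` associated with the prior covariances
`Σ_{ρ_k}`: `Π_T = F` and
`Π_k = A_kᵀ Π_{k+1} A_k − (1/ε) A_kᵀ Π_{k+1} B_k Σ^{1/2} (I + Σ^{1/2} C_k Σ^{1/2})⁻¹ Σ^{1/2} B_kᵀ Π_{k+1} A_k`
with `C_k = (R_k + B_kᵀ Π_{k+1} B_k)/ε`. -/
noncomputable def Ric (k : ℕ) : Matrix (Fin n) (Fin n) ℝ :=
  if h : T ≤ k then P.F
  else
    let Pk := Ric (k + 1)
    let S := msqrt (Srho k)
    let C := (1 / P.ε) • (P.R k + (P.B k)ᵀ * Pk * P.B k)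
    (P.A k)ᵀ * Pk * P.A k -
      (1 / P.ε) • ((P.A k)ᵀ * Pk * P.B k * S * (1 + S * C * S)⁻¹ * S * (P.B k)ᵀ * Pk * P.A k)
termination_by T - k
decreasing_by omega

/-- `C_k = (R_k + B_kᵀ Π_{k+1} B_k)/ε`. -/
noncomputable def Ck (k : ℕ) : Matrix (Fin m) (Fin m) ℝ :=
  (1 / P.ε) • (P.R k + (P.B k)ᵀ * P.Ric T Srho (k + 1) * P.B k)

/-- `Σ_{Q_k} = ε (R_k + B_kᵀ Π_{k+1} B_k)⁻¹`. -/
noncomputable def SigQ (k : ℕ) : Matrix (Fin m) (Fin m) ℝ :=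
  P.ε • (P.R k + (P.B k)ᵀ * P.Ric T Srho (k + 1) * P.B k)⁻¹

/-- Covariance `Σ_{π_k}` of the optimal policy for the fixed prior. -/
noncomputable def SigPi (k : ℕ) : Matrix (Fin m) (Fin m) ℝ :=
  msqrt (Srho k) * (1 + msqrt (Srho k) * P.Ck T Srho k * msqrt (Srho k))⁻¹ * msqrt (Srho k)

/-- Feedback gain `P_k = −(1/ε) Σ_{π_k} B_kᵀ Π_{k+1} A_k`. -/
noncomputable def Pgain (k : ℕ) : Matrix (Fin m) (Fin n) ℝ :=
  -((1 / P.ε) • (P.SigPi T Srho k * (P.B k)ᵀ * P.Ric T Srho (k + 1) * P.A k))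

/-- Forward state covariance recursion under the optimal policy. -/
noncomputable def Sigx : ℕ → Matrix (Fin n) (Fin n) ℝ
  | 0 => P.Sini
  | k + 1 =>
    (P.A k + P.B k * P.Pgain T Srho k) * Sigx k *
        (P.A k + P.B k * P.Pgain T Srho k)ᵀ +
      P.B k * P.SigPi T Srho k * (P.B k)ᵀ + P.Sw k

/-- The standard LQR Riccati recursion `Π̌_k`. -/
noncomputable def RicLQR (k : ℕ) : Matrix (Fin n) (Fin n) ℝ :=
  if h : T ≤ k then P.F
  else
    let Pk := RicLQR (k + 1)
    (P.A k)ᵀ * Pk * P.A k -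
      (P.A k)ᵀ * Pk * P.B k * (P.R k + (P.B k)ᵀ * Pk * P.B k)⁻¹ * (P.B k)ᵀ * Pk * P.A k
termination_by T - k
decreasing_by omega

/-- `Π̂_k = A_kᵀ ⋯ A_{T−1}ᵀ F A_{T−1} ⋯ A_k`. -/
noncomputable def RicHat (k : ℕ) : Matrix (Fin n) (Fin n) ℝ :=
  if h : T ≤ k then P.F
  else (P.A k)ᵀ * RicHat (k + 1) * P.A k
termination_by T - k
decreasing_by omega

/-- `Σ_{w_{k−1}}` with the convention `Σ_{w_{−1}} := Σ_{x_ini}`. -/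
noncomputable def Swm1 (k : ℕ) : Matrix (Fin n) (Fin n) ℝ :=
  if k = 0 then P.Sini else P.Sw (k - 1)

/-- The matrix `M̌_k` from the sufficient condition for stochastic optimal policies. -/
noncomputable def Mcheck (k : ℕ) : Matrix (Fin m) (Fin m) ℝ :=
  (P.R k + (P.B k)ᵀ * P.RicHat T (k + 1) * P.B k)⁻¹ *
      ((P.B k)ᵀ * P.RicLQR T (k + 1) * P.A k * P.Swm1 k * (P.A k)ᵀ *
        P.RicLQR T (k + 1) * P.B k) *
      (P.R k + (P.B k)ᵀ * P.RicHat T (k + 1) * P.B k)⁻¹ -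
    P.ε • (P.R k + (P.B k)ᵀ * P.RicLQR T (k + 1) * P.B k)⁻¹

/-- State covariance under the zero control input. -/
noncomputable def SigxZero : ℕ → Matrix (Fin n) (Fin n) ℝ
  | 0 => P.Sini
  | k + 1 => P.A k * SigxZero k * (P.A k)ᵀ + P.Sw k

/-- The matrix `M̂_k^zero` from the sufficient condition for deterministic optimal policies. -/
noncomputable def MhatZero (k : ℕ) : Matrix (Fin m) (Fin m) ℝ :=
  (P.R k + (P.B k)ᵀ * P.RicLQR T (k + 1) * P.B k)⁻¹ *
      ((P.B k)ᵀ * P.RicHat T (k + 1) * P.A k * P.SigxZero k * (P.A k)ᵀ *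
        P.RicHat T (k + 1) * P.B k) *
      (P.R k + (P.B k)ᵀ * P.RicLQR T (k + 1) * P.B k)⁻¹ -
    P.ε • (P.R k + (P.B k)ᵀ * P.RicHat T (k + 1) * P.B k)⁻¹


/-- The backward recursion `r_k` for the mean offset:
`r_T = 0` and `r_k = A_k⁻¹ r_{k+1} − Π_k⁻¹ A_kᵀ Π_{k+1} B_k (I + Σ_{ρ_k} C_k)⁻¹ μ_{ρ_k}`. -/
noncomputable def rvec (μ : ℕ → Fin m → ℝ) (k : ℕ) : Fin n → ℝ :=
  if h : T ≤ k then 0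
  else
    ((P.A k)⁻¹).mulVec (rvec μ (k + 1)) -
      ((P.Ric T Srho k)⁻¹ * ((P.A k)ᵀ * P.Ric T Srho (k + 1) * P.B k *
        (1 + Srho k * P.Ck T Srho k)⁻¹)).mulVec (μ k)
termination_by T - k
decreasing_by omega

/-- `Θ_k = ε C_k − ε C_k Σ_{π_k} C_k − (I − C_k Σ_{π_k}) B_kᵀ Π_{k+1} A_k Π_k⁻¹ A_kᵀ Π_{k+1} B_k (I − Σ_{π_k} C_k)`. -/
noncomputable def Theta (k : ℕ) : Matrix (Fin m) (Fin m) ℝ :=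
  P.ε • P.Ck T Srho k - P.ε • (P.Ck T Srho k * P.SigPi T Srho k * P.Ck T Srho k) -
    (1 - P.Ck T Srho k * P.SigPi T Srho k) *
      ((P.B k)ᵀ * P.Ric T Srho (k + 1) * P.A k * (P.Ric T Srho k)⁻¹ *
        ((P.A k)ᵀ * P.Ric T Srho (k + 1) * P.B k)) *
      (1 - P.SigPi T Srho k * P.Ck T Srho k)

end LQData

/-- Extend a `T`-tuple of matrices to a function on `ℕ` (by zero). -/
def extT {m : ℕ} (T : ℕ) (σ : Fin T → Matrix (Fin m) (Fin m) ℝ) :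
    ℕ → Matrix (Fin m) (Fin m) ℝ :=
  fun k => if h : k < T then σ ⟨k, h⟩ else 0


/-- Extend a `T`-tuple of vectors to a function on `ℕ` (by zero). -/
def extV {m : ℕ} (T : ℕ) (μ : Fin T → Fin m → ℝ) : ℕ → Fin m → ℝ :=
  fun k => if h : k < T then μ ⟨k, h⟩ else 0

namespace LQData

variable {n m : ℕ} (P : LQData n m) (T : ℕ)

/-- The reduced objective `J̌` as a function of the `T`-tuple of prior covariances. -/
noncomputable def Jcheck (σ : Fin T → Matrix (Fin m) (Fin m) ℝ) : ℝ :=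
  (1 / 2) * ((P.Ric T (extT T σ) 0 * P.Sini).trace +
    ∑ k : Fin T,
      (P.ε * Real.log ((extT T σ k + P.SigQ T (extT T σ) k).det / (P.SigQ T (extT T σ) k).det) +
        (P.Ric T (extT T σ) (k + 1) * P.Sw k).trace))

/-- `L_k = (Σ_{Q_k} + Σ_{ρ_k})⁻¹`. -/
noncomputable def Lmat (Srho : ℕ → Matrix (Fin m) (Fin m) ℝ) (k : ℕ) :
    Matrix (Fin m) (Fin m) ℝ :=
  (P.SigQ T Srho k + Srho k)⁻¹

/-- `E_k = (1/ε) Σ_{Q_k} B_kᵀ Π_{k+1} A_k`. -/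
noncomputable def Emat (Srho : ℕ → Matrix (Fin m) (Fin m) ℝ) (k : ℕ) :
    Matrix (Fin m) (Fin n) ℝ :=
  (1 / P.ε) • (P.SigQ T Srho k * (P.B k)ᵀ * P.Ric T Srho (k + 1) * P.A k)

/-- `J̌'_k = (ε/2) L_k (Σ_{ρ_k} + Σ_{Q_k} − E_k Σ_{x_k} E_kᵀ) L_k`. -/
noncomputable def Jprime (Srho : ℕ → Matrix (Fin m) (Fin m) ℝ) (k : ℕ) :
    Matrix (Fin m) (Fin m) ℝ :=
  (P.ε / 2) • (P.Lmat T Srho k *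
    (Srho k + P.SigQ T Srho k - P.Emat T Srho k * P.Sigx T Srho k * (P.Emat T Srho k)ᵀ) *
    P.Lmat T Srho k)

/-- The alternating-optimization update map `𝒯` on `T`-tuples of prior covariances:
`𝒯(σ)_k = Σ_{π_k} + P_k Σ_{x_k} P_kᵀ`. -/
noncomputable def Tmap (σ : Fin T → Matrix (Fin m) (Fin m) ℝ) :
    Fin T → Matrix (Fin m) (Fin m) ℝ :=
  fun k =>
    P.SigPi T (extT T σ) k +
      P.Pgain T (extT T σ) k * P.Sigx T (extT T σ) k * (P.Pgain T (extT T σ) k)ᵀ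

/-- The objective `J` as a function of the prior means, for fixed prior covariances:
`J(μ) = (1/2)( r_0ᵀ Π_0 r_0 + Σ_k μ_{ρ_k}ᵀ Θ_k μ_{ρ_k} )`. -/
noncomputable def Jmean (Srho : ℕ → Matrix (Fin m) (Fin m) ℝ) (μ : Fin T → Fin m → ℝ) : ℝ :=
  (1 / 2) *
    (P.rvec T Srho (extV T μ) 0 ⬝ᵥ (P.Ric T Srho 0).mulVec (P.rvec T Srho (extV T μ) 0) +
      ∑ k : Fin T, μ k ⬝ᵥ (P.Theta T Srho k).mulVec (μ k))

end LQData

open Matrix Filter Topology LQData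

namespace SigQAux
variable {p q : ℕ}

lemma tr_eq {X : Matrix (Fin p) (Fin p) ℝ} (h : X.IsHermitian) : Xᵀ = X := by
  rw [← Matrix.conjTranspose_eq_transpose_of_trivial]; exact h

lemma psd_smul {c : ℝ} (hc : 0 ≤ c) {X : Matrix (Fin p) (Fin p) ℝ} (hX : X.PosSemidef) :
    (c • X).PosSemidef := by
  exact hX.smul hc

lemma pd_smul {c : ℝ} (hc : 0 < c) {X : Matrix (Fin p) (Fin p) ℝ} (hX : X.PosDef) :
    (c • X).PosDef := by
  exact hX.smul hc

lemma psd_congr {X : Matrix (Fin p) (Fin p) ℝ} (hX : X.PosSemidef)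
    (M : Matrix (Fin p) (Fin q) ℝ) : (Mᵀ * X * M).PosSemidef := by
  have := hX.conjTranspose_mul_mul_same M
  rwa [Matrix.conjTranspose_eq_transpose_of_trivial] at this

lemma psd_congr' {X : Matrix (Fin p) (Fin p) ℝ} (hX : X.PosSemidef)
    (M : Matrix (Fin q) (Fin p) ℝ) : (M * X * Mᵀ).PosSemidef := by
  have := hX.mul_mul_conjTranspose_same M
  rwa [Matrix.conjTranspose_eq_transpose_of_trivial] at this

lemma pd_inv_mul {C : Matrix (Fin p) (Fin p) ℝ} (hC : C.PosDef) : C * C⁻¹ = 1 :=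
  Matrix.mul_nonsing_inv _ hC.det_pos.ne'.isUnit

lemma pd_mul_inv {C : Matrix (Fin p) (Fin p) ℝ} (hC : C.PosDef) : C⁻¹ * C = 1 :=
  Matrix.nonsing_inv_mul _ hC.det_pos.ne'.isUnit

lemma key_SWS {C S : Matrix (Fin p) (Fin p) ℝ} (hC : C.PosDef) (hS : S.PosSemidef) :
    (C⁻¹ - S * (1 + S * C * S)⁻¹ * S).PosSemidef := by
  have hCt : Cᵀ = C := tr_eq hC.isHermitian
  have hSt : Sᵀ = S := tr_eq hS.isHermitian
  have hSCS : (S * C * S).PosSemidef := by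
    have := psd_congr hC.posSemidef S; rwa [hSt] at this
  have hPD : (1 + S * C * S).PosDef := Matrix.PosDef.one.add_posSemidef hSCS
  set W := (1 + S * C * S)⁻¹ with hw
  have hWpd : W.PosDef := hPD.inv
  have hWt : Wᵀ = W := tr_eq hWpd.isHermitian
  have h2 : (1 + S * C * S) * W = 1 := pd_inv_mul hPD
  have hSCSW : S * (C * (S * W)) = 1 - W := by
    rw [eq_sub_iff_add_eq']
    calc W + S * (C * (S * W)) = (1 + S * C * S) * W := by noncomm_ring
      _ = 1 := h2
  set c := C⁻¹ with hc
  have hc1 : C * c = 1 := pd_inv_mul hC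
  have hc2 : c * C = 1 := pd_mul_inv hC
  have key : c - S * W * S
      = (1 - S*W*S*C) * c * (1 - S*W*S*C)ᵀ + (S*W) * (S*W)ᵀ := by
    have htr : (1 - S*W*S*C)ᵀ = 1 - C*(S*(W*S)) := by
      simp only [Matrix.transpose_sub, Matrix.transpose_one, Matrix.transpose_mul, hCt, hSt, hWt]
    have htr2 : (S*W)ᵀ = W*S := by simp only [Matrix.transpose_mul, hSt, hWt]
    rw [htr, htr2]
    calc c - S * W * S
        = (1 - S*W*S*C) * c * (1 - C*(S*(W*S))) + S*W*(W*S) := by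
          symm
          calc (1 - S*W*S*C) * c * (1 - C*(S*(W*S))) + S*W*(W*S)
              = c - (c*C)*(S*(W*S)) - S*(W*(S*(C*c))) + S*W*S*C*(c*C)*(S*(W*S))
                  + S*(W*(W*S)) := by noncomm_ring
            _ = c - 1*(S*(W*S)) - S*(W*(S*1)) + S*W*S*C*1*(S*(W*S)) + S*(W*(W*S)) := by
                  rw [hc1, hc2]
            _ = c - S*(W*S) - S*(W*S) + S*W*(S*(C*(S*W)))*S + S*(W*(W*S)) := by noncomm_ring
            _ = c - S*(W*S) - S*(W*S) + S*W*(1 - W)*S + S*(W*(W*S)) := by rw [hSCSW]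
            _ = c - S * W * S := by noncomm_ring
      _ = (1 - S*W*S*C) * c * (1 - C*(S*(W*S))) + (S*W)*(W*S) := by noncomm_ring
  rw [key]
  refine Matrix.PosSemidef.add (psd_congr' hC.inv.posSemidef _) ?_
  have := Matrix.posSemidef_self_mul_conjTranspose (S*W)
  rwa [Matrix.conjTranspose_eq_transpose_of_trivial] at this

open scoped MatrixOrder in
lemma psd_sqrt_exists {X : Matrix (Fin p) (Fin p) ℝ} (h : X.PosSemidef) :
    ∃ S : Matrix (Fin p) (Fin p) ℝ, S.PosSemidef ∧ S * S = X :=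
  ⟨CFC.sqrt X, (CFC.sqrt_nonneg X).posSemidef, CFC.sqrt_mul_sqrt_self X h.nonneg⟩

lemma inv_sub_inv_psd {A B : Matrix (Fin p) (Fin p) ℝ} (hA : A.PosDef)
    (hBA : (B - A).PosSemidef) : (A⁻¹ - B⁻¹).PosSemidef := by
  obtain ⟨S, hS, hSS⟩ := psd_sqrt_exists hBA
  have hB : B = A + S * S := by rw [hSS]; abel
  set a := A⁻¹ with ha
  have hapd : a.PosDef := hA.inv
  have hat : aᵀ = a := tr_eq hapd.isHermitian
  have hSt : Sᵀ = S := tr_eq hS.isHermitian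
  have hSaS : (S * a * S).PosSemidef := by
    have := psd_congr hapd.posSemidef S; rwa [hSt] at this
  have hPD : (1 + S * a * S).PosDef := Matrix.PosDef.one.add_posSemidef hSaS
  set W := (1 + S * a * S)⁻¹ with hw
  have hWpsd : W.PosSemidef := hPD.inv.posSemidef
  have h2 : (1 + S * a * S) * W = 1 := pd_inv_mul hPD
  have h1 : A * a = 1 := pd_inv_mul hA
  have h2' : S * (a * (S * W)) = 1 - W := by
    rw [eq_sub_iff_add_eq']
    calc W + S * (a * (S * W)) = (1 + S * a * S) * W := by noncomm_ring
      _ = 1 := h2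
  have hkey : B * (a - a * S * W * S * a) = 1 := by
    rw [hB]
    calc (A + S*S) * (a - a*S*W*S*a)
        = A*a + S*S*a - (A*a)*(S*W*S*a) - S*(S*(a*(S*W)))*S*a := by noncomm_ring
      _ = 1 + S*S*a - 1*(S*W*S*a) - S*(1 - W)*S*a := by rw [h1, h2']
      _ = 1 := by noncomm_ring
  have hBinv : B⁻¹ = a - a * S * W * S * a := Matrix.inv_eq_right_inv hkey
  have hdiff : A⁻¹ - B⁻¹ = (S*a)ᵀ * W * (S*a) := by
    rw [hBinv, ← ha]
    simp only [Matrix.transpose_mul, hat, hSt]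
    noncomm_ring
  rw [hdiff]; exact psd_congr hWpsd _

end SigQAux

namespace SigQAux
variable {p q : ℕ}
variable {A : Matrix (Fin p) (Fin p) ℝ} {B : Matrix (Fin p) (Fin q) ℝ}
  {R : Matrix (Fin q) (Fin q) ℝ}

lemma ric_cos {Y : Matrix (Fin p) (Fin p) ℝ} {G : Matrix (Fin q) (Fin q) ℝ}
    {L : Matrix (Fin q) (Fin p) ℝ}
    (hR : R.PosDef) (hY : Y.PosSemidef)
    (hGdef : G = R + Bᵀ * Y * B) (hLdef : L = G⁻¹ * (Bᵀ * Y * A))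
    (K : Matrix (Fin q) (Fin p) ℝ) :
    (A + B * K)ᵀ * Y * (A + B * K) + Kᵀ * R * K
      = (Aᵀ * Y * A - Aᵀ * Y * B * G⁻¹ * Bᵀ * Y * A)
        + (K + L)ᵀ * G * (K + L) := by
  have hYt : Yᵀ = Y := tr_eq hY.isHermitian
  have hGpd : G.PosDef := by rw [hGdef]; exact hR.add_posSemidef (psd_congr hY B)
  have hGit : (G⁻¹)ᵀ = G⁻¹ := tr_eq hGpd.inv.isHermitian
  have hGL : G * L = Bᵀ * Y * A := by
    rw [hLdef, ← Matrix.mul_assoc, pd_inv_mul hGpd, Matrix.one_mul]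
  have hLt : Lᵀ = Aᵀ * (Y * (B * G⁻¹)) := by
    rw [hLdef]
    simp only [Matrix.transpose_mul, Matrix.transpose_transpose, hGit, hYt, Matrix.mul_assoc]
  have e2 : Lᵀ * (G * K) = Aᵀ * (Y * (B * K)) := by
    rw [hLt, show Aᵀ * (Y * (B * G⁻¹)) * (G * K) = Aᵀ * (Y * (B * (G⁻¹ * G * K))) by
      simp only [Matrix.mul_assoc], pd_mul_inv hGpd, Matrix.one_mul]
  have hexp : (K + L)ᵀ * G * (K + L)
      = Kᵀ * G * K + Kᵀ * (G * L) + Lᵀ * (G * K) + Lᵀ * (G * L) := by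
    simp only [Matrix.transpose_add, Matrix.add_mul, Matrix.mul_add, Matrix.mul_assoc]
    abel
  rw [hexp, hGL, e2, hLt, hGdef]
  simp only [Matrix.transpose_add, Matrix.transpose_mul, Matrix.mul_add, Matrix.add_mul,
    Matrix.mul_sub, Matrix.sub_mul, Matrix.mul_assoc]
  abel

lemma ricmap_eq_opt {Y : Matrix (Fin p) (Fin p) ℝ}
    (hR : R.PosDef) (hY : Y.PosSemidef) :
    Aᵀ * Y * A - Aᵀ * Y * B * (R + Bᵀ * Y * B)⁻¹ * Bᵀ * Y * A
      = (A + B * (-((R + Bᵀ * Y * B)⁻¹ * (Bᵀ * Y * A))))ᵀ * Y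
          * (A + B * (-((R + Bᵀ * Y * B)⁻¹ * (Bᵀ * Y * A))))
        + (-((R + Bᵀ * Y * B)⁻¹ * (Bᵀ * Y * A)))ᵀ * R
          * (-((R + Bᵀ * Y * B)⁻¹ * (Bᵀ * Y * A))) := by
  have := ric_cos (A := A) (B := B) hR hY rfl rfl
    (-((R + Bᵀ * Y * B)⁻¹ * (Bᵀ * Y * A)))
  rw [this, neg_add_cancel]
  simp

lemma ricmap_psd {Y : Matrix (Fin p) (Fin p) ℝ}
    (hR : R.PosDef) (hY : Y.PosSemidef) :
    (Aᵀ * Y * A - Aᵀ * Y * B * (R + Bᵀ * Y * B)⁻¹ * Bᵀ * Y * A).PosSemidef := by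
  rw [ricmap_eq_opt hR hY]
  exact (psd_congr hY _).add (psd_congr hR.posSemidef _)

lemma ric_mono {X Y : Matrix (Fin p) (Fin p) ℝ}
    (hR : R.PosDef) (hX : X.PosSemidef) (hY : Y.PosSemidef) (hXY : (Y - X).PosSemidef) :
    ((Aᵀ * Y * A - Aᵀ * Y * B * (R + Bᵀ * Y * B)⁻¹ * Bᵀ * Y * A)
      - (Aᵀ * X * A - Aᵀ * X * B * (R + Bᵀ * X * B)⁻¹ * Bᵀ * X * A)).PosSemidef := by
  set Ky := -((R + Bᵀ * Y * B)⁻¹ * (Bᵀ * Y * A)) with hKy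
  set M := A + B * Ky with hM
  set QY := Mᵀ * Y * M + Kyᵀ * R * Ky with hQY
  set QX := Mᵀ * X * M + Kyᵀ * R * Ky with hQX
  have e1 : Aᵀ * Y * A - Aᵀ * Y * B * (R + Bᵀ * Y * B)⁻¹ * Bᵀ * Y * A = QY :=
    ricmap_eq_opt hR hY
  have e2 : (QX - (Aᵀ * X * A - Aᵀ * X * B * (R + Bᵀ * X * B)⁻¹ * Bᵀ * X * A)).PosSemidef := by
    have h := ric_cos (A := A) (B := B) hR hX rfl rfl Ky
    rw [hQX, h, add_sub_cancel_left]
    exact psd_congr (hR.add_posSemidef (psd_congr hX B)).posSemidef _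
  have e3 : QY - QX = Mᵀ * (Y - X) * M := by
    rw [hQY, hQX]
    simp only [Matrix.mul_sub, Matrix.sub_mul]
    abel
  have combine : (Aᵀ * Y * A - Aᵀ * Y * B * (R + Bᵀ * Y * B)⁻¹ * Bᵀ * Y * A)
      - (Aᵀ * X * A - Aᵀ * X * B * (R + Bᵀ * X * B)⁻¹ * Bᵀ * X * A)
      = (QY - QX) + (QX - (Aᵀ * X * A - Aᵀ * X * B * (R + Bᵀ * X * B)⁻¹ * Bᵀ * X * A)) := by
    rw [sub_add_sub_cancel, e1]
  rw [combine]
  exact (e3 ▸ psd_congr hXY M).add e2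

end SigQAux

open SigQAux in
lemma msqrt_psd {d : ℕ} (X : Matrix (Fin d) (Fin d) ℝ) : (msqrt X).PosSemidef := by
  unfold msqrt
  split
  · next h =>
    have hd : (diagonal ((↑) ∘ (√·) ∘ h.1.eigenvalues : Fin d → ℝ)).PosSemidef :=
      Matrix.PosSemidef.diagonal (fun i => by simp [Real.sqrt_nonneg])
    have := hd.mul_mul_conjTranspose_same (h.1.eigenvectorUnitary : Matrix (Fin d) (Fin d) ℝ)
    simpa [Matrix.star_eq_conjTranspose] using this
  · exact Matrix.PosSemidef.zero

open SigQAux in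
lemma ric_chain {n m : ℕ} (P : LQData n m) (T : ℕ) (Srho : ℕ → Matrix (Fin m) (Fin m) ℝ)
    (hε : 0 < P.ε) (hR : ∀ k < T, (P.R k).PosDef) (hF : P.F.PosDef) :
    ∀ k, (P.RicLQR T k).PosSemidef ∧ (P.RicHat T k).PosSemidef ∧ (P.Ric T Srho k).PosSemidef ∧
      (P.Ric T Srho k - P.RicLQR T k).PosSemidef ∧
      (P.RicHat T k - P.Ric T Srho k).PosSemidef := by
  suffices H : ∀ d k, T ≤ k + d →
      ((P.RicLQR T k).PosSemidef ∧ (P.RicHat T k).PosSemidef ∧ (P.Ric T Srho k).PosSemidef ∧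
      (P.Ric T Srho k - P.RicLQR T k).PosSemidef ∧
      (P.RicHat T k - P.Ric T Srho k).PosSemidef) by
    intro k; exact H T k (by omega)
  intro d
  induction d with
  | zero =>
    intro k hk
    rw [LQData.RicLQR, LQData.RicHat, LQData.Ric]
    simp only [dif_pos (show T ≤ k by omega)]
    refine ⟨hF.posSemidef, hF.posSemidef, hF.posSemidef, ?_, ?_⟩ <;>
      · rw [sub_self]; exact Matrix.PosSemidef.zero
  | succ d ih =>
    intro k hk
    by_cases hTk : T ≤ k
    · rw [LQData.RicLQR, LQData.RicHat, LQData.Ric]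
      simp only [dif_pos hTk]
      refine ⟨hF.posSemidef, hF.posSemidef, hF.posSemidef, ?_, ?_⟩ <;>
        · rw [sub_self]; exact Matrix.PosSemidef.zero
    · obtain ⟨hLQ, hHat, hRic, hd1, hd2⟩ := ih (k+1) (by omega)
      have hRk : (P.R k).PosDef := hR k (by omega)
      set A := P.A k with hA
      set B := P.B k with hB
      set R := P.R k with hRdef
      set Pp := P.Ric T Srho (k+1) with hPp
      set Pv := P.RicLQR T (k+1) with hPv
      set Ph := P.RicHat T (k+1) with hPh
      set S := msqrt (Srho k) with hSdef
      set C := (1 / P.ε) • (R + Bᵀ * Pp * B) with hCdef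
      have eLQR : P.RicLQR T k = Aᵀ * Pv * A -
          Aᵀ * Pv * B * (R + Bᵀ * Pv * B)⁻¹ * Bᵀ * Pv * A := by
        rw [LQData.RicLQR]; simp only [dif_neg hTk]; rfl
      have eHat : P.RicHat T k = Aᵀ * Ph * A := by
        rw [LQData.RicHat]; simp only [dif_neg hTk]; rfl
      have eRic : P.Ric T Srho k = Aᵀ * Pp * A -
          (1 / P.ε) • (Aᵀ * Pp * B * S * (1 + S * C * S)⁻¹ * S * Bᵀ * Pp * A) := by
        rw [LQData.Ric]; simp only [dif_neg hTk]; rfl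
      have hεinv : (0:ℝ) < 1 / P.ε := by positivity
      have hS : S.PosSemidef := msqrt_psd _
      have hSt : Sᵀ = S := tr_eq hS.isHermitian
      have hPt : Ppᵀ = Pp := tr_eq hRic.isHermitian
      have hGpd : (R + Bᵀ * Pp * B).PosDef := hRk.add_posSemidef (psd_congr hRic B)
      have hCpd : C.PosDef := pd_smul hεinv hGpd
      have hSCS : (S * C * S).PosSemidef := by
        have := psd_congr hCpd.posSemidef S; rwa [hSt] at this
      have hWpd : ((1 + S * C * S)⁻¹).PosDef := (Matrix.PosDef.one.add_posSemidef hSCS).inv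
      set W := (1 + S * C * S)⁻¹ with hWdef
      have hGinv : (R + Bᵀ * Pp * B)⁻¹ = (1 / P.ε) • C⁻¹ := by
        apply Matrix.inv_eq_right_inv
        have hεC : P.ε • C = R + Bᵀ * Pp * B := by
          rw [hCdef, smul_smul, mul_one_div_cancel hε.ne', one_smul]
        rw [Matrix.mul_smul, ← hεC, Matrix.smul_mul, pd_inv_mul hCpd, smul_smul,
          one_div_mul_cancel hε.ne', one_smul]
      have hT1 : ((1 / P.ε) • (Aᵀ * Pp * B * S * W * S * Bᵀ * Pp * A)).PosSemidef := by
        have e : Aᵀ * Pp * B * S * W * S * Bᵀ * Pp * A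
            = (S * (Bᵀ * (Pp * A)))ᵀ * W * (S * (Bᵀ * (Pp * A))) := by
          simp only [Matrix.transpose_mul, Matrix.transpose_transpose, hPt, hSt,
            Matrix.mul_assoc]
        rw [e]
        exact psd_smul hεinv.le (psd_congr hWpd.posSemidef _)
      have hmid : (P.Ric T Srho k
          - (Aᵀ * Pp * A - Aᵀ * Pp * B * (R + Bᵀ * Pp * B)⁻¹ * Bᵀ * Pp * A)).PosSemidef := by
        have heq : P.Ric T Srho k
            - (Aᵀ * Pp * A - Aᵀ * Pp * B * (R + Bᵀ * Pp * B)⁻¹ * Bᵀ * Pp * A)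
            = (1 / P.ε) • ((Aᵀ * (Pp * B)) * (C⁻¹ - S * W * S) * (Aᵀ * (Pp * B))ᵀ) := by
          rw [eRic, hGinv]
          simp only [Matrix.transpose_mul, Matrix.transpose_transpose, hPt,
            Matrix.mul_sub, Matrix.sub_mul, Matrix.mul_smul, Matrix.smul_mul,
            smul_sub, Matrix.mul_assoc]
          abel
        rw [heq]
        exact psd_smul hεinv.le (psd_congr' (key_SWS hCpd hS) _)
      have hmono := ric_mono (A := A) (B := B) (R := R) hRk hLQ hRic hd1
      have hLQk : (P.RicLQR T k).PosSemidef := by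
        rw [eLQR]; exact ricmap_psd hRk hLQ
      have hlow : (P.Ric T Srho k - P.RicLQR T k).PosSemidef := by
        have e : P.Ric T Srho k - P.RicLQR T k
            = (P.Ric T Srho k
                - (Aᵀ * Pp * A - Aᵀ * Pp * B * (R + Bᵀ * Pp * B)⁻¹ * Bᵀ * Pp * A))
              + ((Aᵀ * Pp * A - Aᵀ * Pp * B * (R + Bᵀ * Pp * B)⁻¹ * Bᵀ * Pp * A)
                - (Aᵀ * Pv * A - Aᵀ * Pv * B * (R + Bᵀ * Pv * B)⁻¹ * Bᵀ * Pv * A)) := by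
          rw [sub_add_sub_cancel, eLQR]
        rw [e]
        exact hmid.add hmono
      have hRick : (P.Ric T Srho k).PosSemidef := by
        have := hlow.add hLQk
        rwa [sub_add_cancel] at this
      have hup : (P.RicHat T k - P.Ric T Srho k).PosSemidef := by
        have heq : P.RicHat T k - P.Ric T Srho k
            = Aᵀ * (Ph - Pp) * A
              + (1 / P.ε) • (Aᵀ * Pp * B * S * W * S * Bᵀ * Pp * A) := by
          rw [eHat, eRic]
          simp only [Matrix.mul_sub, Matrix.sub_mul]
          abel
        rw [heq]
        exact (psd_congr hd2 A).add hT1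
      have hHatk : (P.RicHat T k).PosSemidef := by
        rw [eHat]; exact psd_congr hHat A
      exact ⟨hLQk, hHatk, hRick, hlow, hup⟩

theorem sigQ_loewner_bounds {n m : ℕ} (hn : 1 ≤ n) (hm : 1 ≤ m) (T : ℕ) (hT : 1 ≤ T)
    (P : LQData n m) (hε : 0 < P.ε)
    (hR : ∀ k < T, (P.R k).PosDef) (hSw : ∀ k < T, (P.Sw k).PosDef)
    (hF : P.F.PosDef) (hSini : P.Sini.PosDef)
    (Srho : ℕ → Matrix (Fin m) (Fin m) ℝ) (hSrho : ∀ k < T, (Srho k).PosSemidef) :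
    ∀ k < T,
      (P.ε • (P.R k + (P.B k)ᵀ * P.RicLQR T (k + 1) * P.B k)⁻¹ - P.SigQ T Srho k).PosSemidef ∧
      (P.SigQ T Srho k - P.ε • (P.R k + (P.B k)ᵀ * P.RicHat T (k + 1) * P.B k)⁻¹).PosSemidef ∧
      (P.ε • (P.R k + (P.B k)ᵀ * P.RicHat T (k + 1) * P.B k)⁻¹).PosDef := by
  intro k hk
  obtain ⟨hLQ, hHat, hRic, hd1, hd2⟩ := ric_chain P T Srho hε hR hF (k + 1)
  have hRk : (P.R k).PosDef := hR k hk
  set B := P.B k with hB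
  set R := P.R k with hRdef
  set Pp := P.Ric T Srho (k+1) with hPp
  set Pv := P.RicLQR T (k+1) with hPv
  set Ph := P.RicHat T (k+1) with hPh
  have hD : (R + Bᵀ * Pp * B).PosDef := hRk.add_posSemidef (SigQAux.psd_congr hRic B)
  have hDv : (R + Bᵀ * Pv * B).PosDef := hRk.add_posSemidef (SigQAux.psd_congr hLQ B)
  have hDh : (R + Bᵀ * Ph * B).PosDef := hRk.add_posSemidef (SigQAux.psd_congr hHat B)
  have e1 : (R + Bᵀ * Pp * B) - (R + Bᵀ * Pv * B) = Bᵀ * (Pp - Pv) * B := by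
    simp only [Matrix.mul_sub, Matrix.sub_mul]; abel
  have e2 : (R + Bᵀ * Ph * B) - (R + Bᵀ * Pp * B) = Bᵀ * (Ph - Pp) * B := by
    simp only [Matrix.mul_sub, Matrix.sub_mul]; abel
  have inv1 : ((R + Bᵀ * Pv * B)⁻¹ - (R + Bᵀ * Pp * B)⁻¹).PosSemidef :=
    SigQAux.inv_sub_inv_psd hDv (e1 ▸ SigQAux.psd_congr hd1 B)
  have inv2 : ((R + Bᵀ * Pp * B)⁻¹ - (R + Bᵀ * Ph * B)⁻¹).PosSemidef :=
    SigQAux.inv_sub_inv_psd hD (e2 ▸ SigQAux.psd_congr hd2 B)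
  have hSigQ : P.SigQ T Srho k = P.ε • (R + Bᵀ * Pp * B)⁻¹ := rfl
  refine ⟨?_, ?_, ?_⟩
  · rw [hSigQ, ← smul_sub]
    exact SigQAux.psd_smul hε.le inv1
  · rw [hSigQ, ← smul_sub]
    exact SigQAux.psd_smul hε.le inv2
  · exact SigQAux.pd_smul hε hDh.inv
end

section
/- Assume each A_k is invertible. For fixed symmetric positive semidefinite covariances Σ_{ρ_0},…,Σ_{ρ_{T−1}}, the function J of the prior means defined by J(μ_{ρ_0},…,μ_{ρ_{T−1}}) = (1/2)[ r_0ᵀ Π_0 r_0 + Σ_{k=0}^{T−1} μ_{ρ_k}ᵀ Θ_k μ_{ρ_k} ] attains its unique global minimum over (ℝ^m)^T at the zero tuple μ_{ρ_0} = ⋯ = μ_{ρ_{T−1}} = 0. -/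
open Matrix Filter Topology

open Matrix Filter Topology LQData

section AuxLemmas

open Matrix

variable {d e : ℕ}

private lemma ctr {a b : ℕ} (A : Matrix (Fin a) (Fin b) ℝ) : Aᴴ = Aᵀ :=
  Matrix.conjTranspose_eq_transpose_of_trivial A

private lemma psd_smul {M : Matrix (Fin d) (Fin d) ℝ} (hM : M.PosSemidef) {c : ℝ}
    (hc : 0 ≤ c) : (c • M).PosSemidef := by
  exact hM.smul hc

private lemma pd_smul {M : Matrix (Fin d) (Fin d) ℝ} (hM : M.PosDef) {c : ℝ}
    (hc : 0 < c) : (c • M).PosDef := by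
  exact hM.smul hc

private lemma psd_tconj {A : Matrix (Fin d) (Fin d) ℝ} (hA : A.PosSemidef)
    (B : Matrix (Fin d) (Fin e) ℝ) : (Bᵀ * A * B).PosSemidef := by
  have h := hA.conjTranspose_mul_mul_same B
  rwa [ctr] at h

private lemma pd_tconj {X A : Matrix (Fin d) (Fin d) ℝ} (hX : X.PosDef) (hA : IsUnit A) :
    (Aᵀ * X * A).PosDef := by
  have hct : Aᴴ = Aᵀ := ctr A
  have h := hX.conjTranspose_mul_mul_same (Matrix.mulVec_injective_iff_isUnit.2 hA)
  rwa [hct] at h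

private lemma pd_of_mul_eq_one {X Y : Matrix (Fin d) (Fin d) ℝ} (hY : Y.PosDef)
    (h : X * Y = 1) : X.PosDef ∧ X⁻¹ = Y := by
  have hX : X = Y⁻¹ := (Matrix.inv_eq_left_inv h).symm
  constructor
  · rw [hX]; exact hY.inv
  · rw [hX, Matrix.nonsing_inv_nonsing_inv _ hY.det_pos.ne'.isUnit]

open scoped MatrixOrder in
private lemma msqrt_spec {X : Matrix (Fin d) (Fin d) ℝ} (hX : X.PosSemidef) :
    (msqrt X).PosSemidef ∧ msqrt X * msqrt X = X := by
  unfold msqrt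
  rw [dif_pos hX]
  have e : hX.1.eigenvectorUnitary.1 * diagonal ((↑) ∘ (√·) ∘ hX.1.eigenvalues) *
      (star hX.1.eigenvectorUnitary : Matrix (Fin d) (Fin d) ℝ) = CFC.sqrt X := by
    rw [CFC.sqrt_eq_cfc, cfc_nnreal_eq_real _ X, hX.1.cfc_eq]
    simp only [IsHermitian.cfc, Unitary.conjStarAlgAut_apply, Real.coe_sqrt, Real.coe_toNNReal']
    congr 3
    funext i
    simp [max_def]
    split_ifs <;> simp_all [Real.sqrt_eq_zero']
  rw [e]
  exact ⟨(CFC.sqrt_nonneg X).posSemidef, CFC.sqrt_mul_sqrt_self X hX.nonneg⟩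

end AuxLemmas
section CoreLemmas

open Matrix

variable {nn mm : ℕ}

set_option maxHeartbeats 1000000 in
/-- Core algebra: the Riccati-updated middle matrix `X` is PD with explicit inverse `Y`. -/
private lemma core_XY
    (ε : ℝ) (hε : 0 < ε)
    (B : Matrix (Fin nn) (Fin mm) ℝ)
    (R S : Matrix (Fin mm) (Fin mm) ℝ) (hR : R.PosDef)
    (hS : S.PosSemidef) (hSt : Sᵀ = S)
    (Pi1 : Matrix (Fin nn) (Fin nn) ℝ) (hPi : Pi1.PosDef)
    (C N M X Y : Matrix _ _ ℝ)
    (hC : C = (1/ε) • (R + Bᵀ * Pi1 * B))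
    (hN : N = 1 + S * C * S)
    (hM : M = ε • (1 : Matrix (Fin mm) (Fin mm) ℝ) + S * R * S)
    (hX : X = Pi1 - (1/ε) • (Pi1 * B * S * N⁻¹ * S * Bᵀ * Pi1))
    (hY : Y = Pi1⁻¹ + B * S * M⁻¹ * S * Bᵀ) :
    X.PosDef ∧ X⁻¹ = Y ∧ M.PosDef ∧ N.PosDef ∧ Y.PosDef := by
  have hW : (Bᵀ * Pi1 * B).PosSemidef := psd_tconj hPi.posSemidef B
  have hCpd : C.PosDef := by
    rw [hC]; exact pd_smul (hR.add_posSemidef hW) (by positivity)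
  have hSCS : (S * C * S).PosSemidef := by
    have := psd_tconj hCpd.posSemidef S; rwa [hSt] at this
  have hNpd : N.PosDef := by rw [hN]; exact Matrix.PosDef.one.add_posSemidef hSCS
  have hSRS : (S * R * S).PosSemidef := by
    have := psd_tconj hR.posSemidef S; rwa [hSt] at this
  have hMpd : M.PosDef := by
    rw [hM]; exact (pd_smul Matrix.PosDef.one hε).add_posSemidef hSRS
  have hBSY : (B * S * M⁻¹ * S * Bᵀ).PosSemidef := by
    have h1 := hMpd.inv.posSemidef.mul_mul_conjTranspose_same (B * S)
    rw [ctr, Matrix.transpose_mul, hSt] at h1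
    have h2 : B * S * M⁻¹ * (S * Bᵀ) = B * S * M⁻¹ * S * Bᵀ :=
      (Matrix.mul_assoc _ _ _).symm
    rwa [h2] at h1
  have hYpd : Y.PosDef := by rw [hY]; exact hPi.inv.add_posSemidef hBSY
  -- inverse cancellation facts
  have e1 : Pi1 * Pi1⁻¹ = 1 := Matrix.mul_nonsing_inv _ hPi.det_pos.ne'.isUnit
  have eN : N⁻¹ * N = 1 := Matrix.nonsing_inv_mul _ hNpd.det_pos.ne'.isUnit
  have eM : M * M⁻¹ = 1 := Matrix.mul_nonsing_inv _ hMpd.det_pos.ne'.isUnit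
  have hεN : ε • N = M + S * (Bᵀ * Pi1 * B) * S := by
    rw [hN, hC, hM]
    simp only [smul_add, Matrix.mul_add, Matrix.add_mul, Matrix.mul_smul,
      Matrix.smul_mul, smul_smul, mul_one_div]
    simp only [div_self hε.ne', one_smul, Matrix.mul_assoc]
    abel
  have hSWS : S * (Bᵀ * (Pi1 * (B * S))) = ε • N - M := by
    rw [hεN]
    simp only [Matrix.mul_assoc]
    abel
  have hA1 : N⁻¹ * (S * (Bᵀ * (Pi1 * (B * (S * M⁻¹))))) = ε • M⁻¹ - N⁻¹ := by
    have h' : S * (Bᵀ * (Pi1 * (B * (S * M⁻¹)))) = (ε • N - M) * M⁻¹ := by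
      rw [← hSWS]; simp only [Matrix.mul_assoc]
    rw [h']
    rw [Matrix.sub_mul, Matrix.mul_sub, eM, Matrix.mul_one, Matrix.smul_mul,
      Matrix.mul_smul, ← Matrix.mul_assoc, eN, Matrix.one_mul]
  have key : X * Y = 1 := by
    rw [hX, hY]
    have expand : (Pi1 - (1/ε) • (Pi1 * B * S * N⁻¹ * S * Bᵀ * Pi1)) *
        (Pi1⁻¹ + B * S * M⁻¹ * S * Bᵀ)
        = Pi1 * Pi1⁻¹ + Pi1 * (B * (S * (M⁻¹ * (S * Bᵀ))))
          - (1/ε) • (Pi1 * (B * (S * (N⁻¹ * (S * (Bᵀ * (Pi1 * Pi1⁻¹)))))))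
          - (1/ε) • (Pi1 * (B * (S * (N⁻¹ *
              (S * (Bᵀ * (Pi1 * (B * (S * (M⁻¹ * (S * Bᵀ))))))))))) := by
      simp only [Matrix.mul_add, Matrix.add_mul, Matrix.mul_sub, Matrix.sub_mul,
        Matrix.smul_mul, Matrix.mul_smul, Matrix.mul_assoc]
      abel
    rw [expand, e1]
    have h4 : N⁻¹ * (S * (Bᵀ * (Pi1 * (B * (S * (M⁻¹ * (S * Bᵀ))))))) =
        (ε • M⁻¹ - N⁻¹) * (S * Bᵀ) := by
      rw [← hA1]; simp only [Matrix.mul_assoc]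
    rw [h4]
    simp only [Matrix.mul_one, Matrix.sub_mul, Matrix.smul_mul, Matrix.mul_sub,
      Matrix.mul_smul, smul_sub, smul_smul, Matrix.mul_assoc, one_div,
      inv_mul_cancel₀ hε.ne', one_smul]
    abel
  obtain ⟨h1, h2⟩ := pd_of_mul_eq_one hYpd key
  exact ⟨h1, h2, hMpd, hNpd, hYpd⟩

end CoreLemmas
section ThetaCore

open Matrix

variable {mm : ℕ}

set_option maxHeartbeats 1600000 in
/-- The key `m × m` algebra: the quadratic-form matrix `Θ` equals
`R − R S M⁻¹ S R = (R⁻¹ + ε⁻¹ S S)⁻¹`, which is positive definite. -/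
private lemma theta_core
    (ε : ℝ) (hε : 0 < ε)
    (R S W : Matrix (Fin mm) (Fin mm) ℝ) (hR : R.PosDef)
    (hS : S.PosSemidef) (hSt : Sᵀ = S) (hW : W.PosSemidef)
    (C N M : Matrix (Fin mm) (Fin mm) ℝ)
    (hC : C = (1/ε) • (R + W))
    (hN : N = 1 + S * C * S)
    (hM : M = ε • (1 : Matrix (Fin mm) (Fin mm) ℝ) + S * R * S)
    (hNpd : N.PosDef) (hMpd : M.PosDef) :
    ε • C - ε • (C * (S * N⁻¹ * S) * C) -
        (1 - C * (S * N⁻¹ * S)) * (W + W * (S * (M⁻¹ * (S * W)))) *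
          (1 - (S * N⁻¹ * S) * C) =
      R - R * (S * (M⁻¹ * (S * R))) ∧
    (R - R * (S * (M⁻¹ * (S * R)))).PosDef := by
  have eN : N⁻¹ * N = 1 := Matrix.nonsing_inv_mul _ hNpd.det_pos.ne'.isUnit
  have eN2 : N * N⁻¹ = 1 := Matrix.mul_nonsing_inv _ hNpd.det_pos.ne'.isUnit
  have eM : M⁻¹ * M = 1 := Matrix.nonsing_inv_mul _ hMpd.det_pos.ne'.isUnit
  have eM2 : M * M⁻¹ = 1 := Matrix.mul_nonsing_inv _ hMpd.det_pos.ne'.isUnit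
  have eR : R * R⁻¹ = 1 := Matrix.mul_nonsing_inv _ hR.det_pos.ne'.isUnit
  have hεC : ε • C = R + W := by
    rw [hC, smul_smul, mul_one_div, div_self hε.ne', one_smul]
  set Q : Matrix (Fin mm) (Fin mm) ℝ := R - R * (S * (M⁻¹ * (S * R))) with hQ
  -- `M`-cancellation identities
  have jm : M⁻¹ * (S * (R * S)) = 1 - ε • M⁻¹ := by
    have h1 : S * (R * S) = M - ε • 1 := by
      rw [hM]; simp only [Matrix.mul_assoc]; abel
    rw [h1, Matrix.mul_sub, eM, Matrix.mul_smul, Matrix.mul_one]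
  have hsub : S * (R * S) = M - ε • 1 := by
    rw [hM]; simp only [Matrix.mul_assoc]; abel
  have jm' : S * (R * (S * M⁻¹)) = 1 - ε • M⁻¹ := by
    have h1 : S * (R * (S * M⁻¹)) = (S * (R * S)) * M⁻¹ := by
      simp only [Matrix.mul_assoc]
    rw [h1, hsub, Matrix.sub_mul, eM2, Matrix.smul_mul, Matrix.one_mul]
  -- `Q`-identities
  have j1 : S * (S * Q) = ε • (S * (M⁻¹ * (S * R))) := by
    rw [hQ]
    have h1 : S * (S * (R - R * (S * (M⁻¹ * (S * R))))) =
        S * (S * R) - S * ((S * (R * (S * M⁻¹))) * (S * R)) := by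
      simp only [Matrix.mul_sub, Matrix.mul_assoc]
    rw [h1, jm']
    simp only [Matrix.sub_mul, Matrix.one_mul, Matrix.smul_mul, Matrix.mul_sub,
      Matrix.mul_smul]
    abel
  have j2 : Q * (S * S) = ε • (R * (S * (M⁻¹ * S))) := by
    rw [hQ]
    have h1 : (R - R * (S * (M⁻¹ * (S * R)))) * (S * S) =
        R * (S * S) - R * (S * ((M⁻¹ * (S * (R * S))) * S)) := by
      simp only [Matrix.sub_mul, Matrix.mul_assoc]
    rw [h1, jm]
    simp only [Matrix.sub_mul, Matrix.one_mul, Matrix.smul_mul, Matrix.mul_sub,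
      Matrix.mul_smul]
    abel
  have j3 : S * (S * (Q * (S * S))) = ε • (S * S) - (ε * ε) • (S * (M⁻¹ * S)) := by
    rw [j2]
    simp only [Matrix.mul_smul]
    have h7 : S * (S * (R * (S * (M⁻¹ * S)))) = S * ((S * (R * (S * M⁻¹))) * S) := by
      simp only [Matrix.mul_assoc]
    rw [h7, jm']
    simp only [Matrix.sub_mul, Matrix.one_mul, Matrix.smul_mul, Matrix.mul_sub,
      Matrix.mul_smul, smul_sub, smul_smul]
  -- the `K`-inverses
  have hno : N⁻¹ * (S * (C * (S * S))) = S - N⁻¹ * S := by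
    have hNS : N * S = S + S * (C * (S * S)) := by
      rw [hN]; simp only [Matrix.add_mul, Matrix.one_mul, Matrix.mul_assoc]
    have h5 : N⁻¹ * S + N⁻¹ * (S * (C * (S * S))) = S := by
      rw [← Matrix.mul_add, ← hNS, ← Matrix.mul_assoc, eN, Matrix.one_mul]
    rw [eq_sub_iff_add_eq, add_comm]; exact h5
  have hno2 : S * (C * (S * (N⁻¹ * (S * C)))) = S * C - N⁻¹ * (S * C) := by
    have hSCS' : S * (C * S) = N - 1 := by
      rw [hN]; simp only [Matrix.mul_assoc]; abel
    have h6 : S * (C * (S * (N⁻¹ * (S * C)))) = (S * (C * S)) * (N⁻¹ * (S * C)) := by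
      simp only [Matrix.mul_assoc]
    rw [h6, hSCS', Matrix.sub_mul, Matrix.one_mul, ← Matrix.mul_assoc, eN2,
      Matrix.one_mul]
  have hKl : (1 - C * (S * N⁻¹ * S)) * (1 + C * (S * S)) = 1 := by
    have hexp : (1 - C * (S * N⁻¹ * S)) * (1 + C * (S * S)) =
        1 + C * (S * S) - C * (S * (N⁻¹ * S)) - C * (S * (N⁻¹ * (S * (C * (S * S))))) := by
      simp only [Matrix.mul_add, Matrix.add_mul, Matrix.mul_sub, Matrix.sub_mul,
        Matrix.one_mul, Matrix.mul_one, Matrix.mul_assoc]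
      abel
    rw [hexp, hno, Matrix.mul_sub, Matrix.mul_sub]
    abel
  have hKr : (1 + S * S * C) * (1 - (S * N⁻¹ * S) * C) = 1 := by
    have hexp : (1 + S * S * C) * (1 - (S * N⁻¹ * S) * C) =
        1 - S * (N⁻¹ * (S * C)) + S * (S * C) - S * (S * (C * (S * (N⁻¹ * (S * C))))) := by
      simp only [Matrix.mul_add, Matrix.add_mul, Matrix.mul_sub, Matrix.sub_mul,
        Matrix.one_mul, Matrix.mul_one, Matrix.mul_assoc]
      abel
    rw [hexp, hno2, Matrix.mul_sub]
    abel
  -- the central expansion: Θ'' = (1 + C S S) Q (1 + S S C)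
  have key2 : ε • C + (ε • C) * (S * (S * C)) - (W + W * (S * (M⁻¹ * (S * W)))) =
      (1 + C * (S * S)) * (Q * (1 + S * S * C)) := by
    have hexp : (1 + C * (S * S)) * (Q * (1 + S * S * C)) =
        Q + C * (S * (S * Q)) + Q * (S * (S * C)) + C * (S * (S * (Q * (S * (S * C))))) := by
      simp only [Matrix.mul_add, Matrix.add_mul, Matrix.one_mul, Matrix.mul_one,
        Matrix.mul_assoc]
      abel
    have hj2' : Q * (S * (S * C)) = ε • (R * (S * (M⁻¹ * (S * C)))) := by
      have : Q * (S * (S * C)) = (Q * (S * S)) * C := by simp only [Matrix.mul_assoc]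
      rw [this, j2, Matrix.smul_mul]
      simp only [Matrix.mul_assoc]
    have hj3' : S * (S * (Q * (S * (S * C)))) =
        ε • (S * (S * C)) - (ε * ε) • (S * (M⁻¹ * (S * C))) := by
      have : S * (S * (Q * (S * (S * C)))) = (S * (S * (Q * (S * S)))) * C := by
        simp only [Matrix.mul_assoc]
      rw [this, j3, Matrix.sub_mul, Matrix.smul_mul, Matrix.smul_mul]
      simp only [Matrix.mul_assoc]
    rw [hexp, hj3', j1, hj2']
    -- replace all `ε • C` by `R + W`
    have hc1 : C * (ε • (S * (M⁻¹ * (S * R)))) = (R + W) * (S * (M⁻¹ * (S * R))) := by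
      rw [← hεC, Matrix.mul_smul, Matrix.smul_mul]
    have hc2 : ε • (R * (S * (M⁻¹ * (S * C)))) = R * (S * (M⁻¹ * (S * (R + W)))) := by
      rw [← hεC]
      simp only [Matrix.mul_smul]
    have hc3 : C * (ε • (S * (S * C)) - (ε * ε) • (S * (M⁻¹ * (S * C)))) =
        (ε • C) * (S * (S * C)) - (R + W) * (S * (M⁻¹ * (S * (R + W)))) := by
      rw [Matrix.mul_sub]
      congr 1
      · rw [Matrix.mul_smul, Matrix.smul_mul]
      · rw [← hεC]
        simp only [Matrix.mul_smul, Matrix.smul_mul, smul_smul]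
    rw [hc1, hc2, hc3, hεC, hQ]
    simp only [Matrix.mul_add, Matrix.add_mul, Matrix.mul_sub, Matrix.sub_mul,
      Matrix.mul_assoc]
    abel
  constructor
  · -- chain the pieces together
    have hKC : (1 - C * (S * N⁻¹ * S)) * ((ε • C + (ε • C) * (S * (S * C))) *
        (1 - (S * N⁻¹ * S) * C)) = ε • C - ε • (C * (S * N⁻¹ * S) * C) := by
      have h1 : (ε • C + (ε • C) * (S * (S * C))) * (1 - (S * N⁻¹ * S) * C) =
          (ε • C) * ((1 + S * S * C) * (1 - (S * N⁻¹ * S) * C)) := by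
        simp only [Matrix.mul_add, Matrix.add_mul, Matrix.mul_one, Matrix.one_mul,
          Matrix.mul_assoc]
      rw [h1, hKr, Matrix.mul_one]
      simp only [Matrix.sub_mul, Matrix.one_mul, Matrix.mul_smul, Matrix.smul_mul,
        Matrix.mul_assoc]
      module
    calc ε • C - ε • (C * (S * N⁻¹ * S) * C) -
          (1 - C * (S * N⁻¹ * S)) * (W + W * (S * (M⁻¹ * (S * W)))) *
            (1 - (S * N⁻¹ * S) * C)
        = (1 - C * (S * N⁻¹ * S)) * (((ε • C + (ε • C) * (S * (S * C))) -
            (W + W * (S * (M⁻¹ * (S * W))))) * (1 - (S * N⁻¹ * S) * C)) := by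
          conv_rhs => rw [Matrix.sub_mul (ε • C + (ε • C) * (S * (S * C)))
            (W + W * (S * (M⁻¹ * (S * W)))) (1 - (S * N⁻¹ * S) * C),
            Matrix.mul_sub, hKC]
          simp only [Matrix.mul_assoc]
      _ = (1 - C * (S * N⁻¹ * S)) * (((1 + C * (S * S)) * (Q * (1 + S * S * C))) *
            (1 - (S * N⁻¹ * S) * C)) := by rw [key2]
      _ = ((1 - C * (S * N⁻¹ * S)) * (1 + C * (S * S))) *
            (Q * ((1 + S * S * C) * (1 - (S * N⁻¹ * S) * C))) := by
          simp only [Matrix.mul_assoc]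
      _ = Q := by rw [hKl, hKr, Matrix.one_mul, Matrix.mul_one]
  · -- positive definiteness of Q
    have hSS : (S * S).PosSemidef := by
      have h := psd_tconj Matrix.PosSemidef.one S
      rwa [Matrix.mul_one, hSt] at h
    have hZ : (R⁻¹ + (1/ε) • (S * S)).PosDef :=
      hR.inv.add_posSemidef (psd_smul hSS (by positivity))
    have hQZ : Q * (R⁻¹ + (1/ε) • (S * S)) = 1 := by
      have hin : M⁻¹ * (S * (R * (S * S))) = S - ε • (M⁻¹ * S) := by
        have h1 : M⁻¹ * (S * (R * (S * S))) = (M⁻¹ * (S * (R * S))) * S := by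
          simp only [Matrix.mul_assoc]
        rw [h1, jm, Matrix.sub_mul, Matrix.one_mul, Matrix.smul_mul]
      have hexp : Q * (R⁻¹ + (1/ε) • (S * S)) =
          R * R⁻¹ + (1/ε) • (R * (S * S))
            - R * (S * (M⁻¹ * (S * (R * R⁻¹))))
            - (1/ε) • (R * (S * (M⁻¹ * (S * (R * (S * S)))))) := by
        rw [hQ]
        simp only [Matrix.mul_add, Matrix.add_mul, Matrix.mul_sub, Matrix.sub_mul,
          Matrix.mul_smul, Matrix.smul_mul, Matrix.mul_assoc]
        module
      rw [hexp, eR, Matrix.mul_one]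
      have h2 : M⁻¹ * (S * (R * (S * S))) = S - ε • (M⁻¹ * S) := hin
      rw [h2]
      simp only [Matrix.mul_sub, Matrix.mul_smul, smul_sub, smul_smul, one_div,
        inv_mul_cancel₀ hε.ne', one_smul]
      module
    exact (pd_of_mul_eq_one hZ hQZ).1
end ThetaCore
section GlueLemmas

open Matrix

variable {n m : ℕ}

private lemma conj_rearrange (A Pi1 : Matrix (Fin n) (Fin n) ℝ)
    (B : Matrix (Fin n) (Fin m) ℝ) (S N : Matrix (Fin m) (Fin m) ℝ) (c : ℝ) :
    Aᵀ * Pi1 * A - c • (Aᵀ * Pi1 * B * S * N * S * Bᵀ * Pi1 * A)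
      = Aᵀ * (Pi1 - c • (Pi1 * B * S * N * S * Bᵀ * Pi1)) * A := by
  simp only [Matrix.mul_sub, Matrix.sub_mul, Matrix.mul_smul, Matrix.smul_mul,
    Matrix.mul_assoc]

private lemma ric_ge (P : LQData n m) (T : ℕ) (Srho : ℕ → Matrix (Fin m) (Fin m) ℝ)
    (k : ℕ) (h : T ≤ k) : P.Ric T Srho k = P.F := by
  rw [LQData.Ric, dif_pos h]

private lemma ric_lt (P : LQData n m) (T : ℕ) (Srho : ℕ → Matrix (Fin m) (Fin m) ℝ)
    (k : ℕ) (h : k < T) :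
    P.Ric T Srho k =
      (P.A k)ᵀ * P.Ric T Srho (k+1) * P.A k -
        (1 / P.ε) • ((P.A k)ᵀ * P.Ric T Srho (k+1) * P.B k * msqrt (Srho k) *
          (1 + msqrt (Srho k) *
              ((1 / P.ε) • (P.R k + (P.B k)ᵀ * P.Ric T Srho (k+1) * P.B k)) *
            msqrt (Srho k))⁻¹ *
          msqrt (Srho k) * (P.B k)ᵀ * P.Ric T Srho (k+1) * P.A k) := by
  rw [LQData.Ric]
  rw [dif_neg (by omega)]

private lemma ric_pd (P : LQData n m) (T : ℕ) (Srho : ℕ → Matrix (Fin m) (Fin m) ℝ)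
    (hε : 0 < P.ε) (hA : ∀ k < T, IsUnit (P.A k)) (hR : ∀ k < T, (P.R k).PosDef)
    (hF : P.F.PosDef) (hSrho : ∀ k < T, (Srho k).PosSemidef) :
    ∀ k, (P.Ric T Srho k).PosDef := by
  have main : ∀ j k, T - k ≤ j → (P.Ric T Srho k).PosDef := by
    intro j
    induction j with
    | zero => intro k hk; rw [ric_ge P T Srho k (by omega)]; exact hF
    | succ j ih =>
      intro k hk
      rcases le_or_gt T k with hTk | hTk
      · rw [ric_ge P T Srho k hTk]; exact hF
      · have hPi := ih (k+1) (by omega)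
        obtain ⟨hSpsd, hSS⟩ := msqrt_spec (hSrho k hTk)
        have hSt : (msqrt (Srho k))ᵀ = msqrt (Srho k) := by
          rw [← ctr]; exact hSpsd.1
        obtain ⟨hXpd, hXinv, hMpd, hNpd, hYpd⟩ :=
          core_XY P.ε hε (P.B k) (P.R k) (msqrt (Srho k)) (hR k hTk) hSpsd hSt
            (P.Ric T Srho (k+1)) hPi _ _ _ _ _ rfl rfl rfl rfl rfl
        rw [ric_lt P T Srho k hTk, conj_rearrange]
        exact pd_tconj hXpd (hA k hTk)
  intro k; exact main (T - k) k le_rfl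

set_option maxHeartbeats 1000000 in
private lemma theta_pd (P : LQData n m) (T : ℕ) (Srho : ℕ → Matrix (Fin m) (Fin m) ℝ)
    (hε : 0 < P.ε) (hA : ∀ k < T, IsUnit (P.A k)) (hR : ∀ k < T, (P.R k).PosDef)
    (hF : P.F.PosDef) (hSrho : ∀ k < T, (Srho k).PosSemidef)
    (k : ℕ) (hk : k < T) : (P.Theta T Srho k).PosDef := by
  have hPi : (P.Ric T Srho (k+1)).PosDef := ric_pd P T Srho hε hA hR hF hSrho (k+1)
  obtain ⟨hSpsd, hSS⟩ := msqrt_spec (hSrho k hk)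
  have hSt : (msqrt (Srho k))ᵀ = msqrt (Srho k) := by rw [← ctr]; exact hSpsd.1
  set S := msqrt (Srho k) with hSdef
  set Rk := P.R k with hRk
  set Bk := P.B k with hBk
  set Ak := P.A k with hAk
  set Pi1 := P.Ric T Srho (k+1) with hPi1
  obtain ⟨hXpd, hXinv, hMpd, hNpd, hYpd⟩ :=
    core_XY P.ε hε Bk Rk S (hR k hk) hSpsd hSt Pi1 hPi _ _ _ _ _ rfl rfl rfl rfl rfl
  have hCk : P.Ck T Srho k = (1/P.ε) • (Rk + Bkᵀ * Pi1 * Bk) := rfl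
  have hW : (Bkᵀ * Pi1 * Bk).PosSemidef := psd_tconj hPi.posSemidef Bk
  have hAu : IsUnit Ak.det := (Matrix.isUnit_iff_isUnit_det _).1 (hA k hk)
  have eA : Ak * Ak⁻¹ = 1 := Matrix.mul_nonsing_inv _ hAu
  have eAT : (Akᵀ)⁻¹ * Akᵀ = 1 :=
    Matrix.nonsing_inv_mul _ (by rw [Matrix.det_transpose]; exact hAu)
  have ePi : Pi1 * Pi1⁻¹ = 1 := Matrix.mul_nonsing_inv _ hPi.det_pos.ne'.isUnit
  have hG : Bkᵀ * Pi1 * Ak * (P.Ric T Srho k)⁻¹ * (Akᵀ * Pi1 * Bk) =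
      (Bkᵀ * Pi1 * Bk) + (Bkᵀ * Pi1 * Bk) *
        (S * ((P.ε • (1 : Matrix (Fin m) (Fin m) ℝ) + S * Rk * S)⁻¹ *
          (S * (Bkᵀ * Pi1 * Bk)))) := by
    rw [ric_lt P T Srho k hk, conj_rearrange, Matrix.mul_inv_rev, Matrix.mul_inv_rev,
      hXinv]
    have c1 : ∀ Z : Matrix (Fin n) (Fin m) ℝ, Ak * (Ak⁻¹ * Z) = Z := fun Z => by
      rw [← Matrix.mul_assoc, eA, Matrix.one_mul]
    have c2 : ∀ Z : Matrix (Fin n) (Fin m) ℝ, (Akᵀ)⁻¹ * (Akᵀ * Z) = Z := fun Z => by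
      rw [← Matrix.mul_assoc, eAT, Matrix.one_mul]
    have c3 : ∀ Z : Matrix (Fin n) (Fin m) ℝ, Pi1 * (Pi1⁻¹ * Z) = Z := fun Z => by
      rw [← Matrix.mul_assoc, ePi, Matrix.one_mul]
    simp only [← hAk, Matrix.mul_add, Matrix.add_mul, Matrix.mul_assoc, c1, c2, c3]
  obtain ⟨hTQ, hQpd⟩ := theta_core P.ε hε Rk S (Bkᵀ * Pi1 * Bk) (hR k hk) hSpsd hSt hW
    ((1/P.ε) • (Rk + Bkᵀ * Pi1 * Bk))
    (1 + S * ((1/P.ε) • (Rk + Bkᵀ * Pi1 * Bk)) * S)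
    (P.ε • (1 : Matrix (Fin m) (Fin m) ℝ) + S * Rk * S)
    rfl rfl rfl hNpd hMpd
  have hTheta : P.Theta T Srho k =
      Rk - Rk * (S * ((P.ε • (1 : Matrix (Fin m) (Fin m) ℝ) + S * Rk * S)⁻¹ *
        (S * Rk))) := by
    simp only [LQData.Theta, LQData.SigPi, hCk, ← hSdef, ← hRk, ← hBk, ← hAk, ← hPi1]
    rw [hG]
    exact hTQ
  rw [hTheta]
  exact hQpd

private lemma extV_zero {T : ℕ} : extV T (fun _ => (0 : Fin m → ℝ)) = fun _ => 0 := by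
  funext k
  unfold extV
  split <;> rfl

private lemma rvec_zero (P : LQData n m) (T : ℕ) (Srho : ℕ → Matrix (Fin m) (Fin m) ℝ) :
    ∀ k, P.rvec T Srho (fun _ => 0) k = 0 := by
  have main : ∀ j k, T - k ≤ j → P.rvec T Srho (fun _ => 0) k = 0 := by
    intro j
    induction j with
    | zero => intro k hk; rw [LQData.rvec, dif_pos (by omega)]
    | succ j ih =>
      intro k hk
      rcases le_or_gt T k with hTk | hTk
      · rw [LQData.rvec, dif_pos hTk]
      · rw [LQData.rvec, dif_neg (not_le.2 hTk), ih (k+1) (by omega)]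
        simp [Matrix.mulVec_zero]
  intro k; exact main (T - k) k le_rfl

private lemma quad_nonneg {d : ℕ} {Mx : Matrix (Fin d) (Fin d) ℝ} (h : Mx.PosSemidef)
    (x : Fin d → ℝ) : 0 ≤ x ⬝ᵥ Mx *ᵥ x := by
  have h2 := h.dotProduct_mulVec_nonneg x
  rwa [show star x = x from by funext i; simp] at h2

private lemma quad_pos {d : ℕ} {Mx : Matrix (Fin d) (Fin d) ℝ} (h : Mx.PosDef)
    {x : Fin d → ℝ} (hx : x ≠ 0) : 0 < x ⬝ᵥ Mx *ᵥ x := by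
  have h2 := h.dotProduct_mulVec_pos hx
  rwa [show star x = x from by funext i; simp] at h2

end GlueLemmas
theorem jmean_min_zero' {n m : ℕ} (hn : 1 ≤ n) (hm : 1 ≤ m) (T : ℕ) (hT : 1 ≤ T)
    (P : LQData n m) (hε : 0 < P.ε)
    (hA : ∀ k < T, IsUnit (P.A k))
    (hR : ∀ k < T, (P.R k).PosDef) (hSw : ∀ k < T, (P.Sw k).PosDef)
    (hF : P.F.PosDef) (hSini : P.Sini.PosDef)
    (Srho : ℕ → Matrix (Fin m) (Fin m) ℝ) (hSrho : ∀ k < T, (Srho k).PosSemidef) :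
    (∀ μ : Fin T → Fin m → ℝ, P.Jmean T Srho (fun _ => 0) ≤ P.Jmean T Srho μ) ∧
      (∀ μ : Fin T → Fin m → ℝ,
        P.Jmean T Srho μ = P.Jmean T Srho (fun _ => 0) → μ = fun _ => 0) := by
  have hJ0 : P.Jmean T Srho (fun _ => 0) = 0 := by
    simp only [LQData.Jmean, extV_zero, rvec_zero]
    simp [zero_dotProduct]
  have hq0 : ∀ μ : Fin T → Fin m → ℝ,
      0 ≤ P.rvec T Srho (extV T μ) 0 ⬝ᵥ
        (P.Ric T Srho 0).mulVec (P.rvec T Srho (extV T μ) 0) := fun μ =>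
    quad_nonneg (ric_pd P T Srho hε hA hR hF hSrho 0).posSemidef _
  have hqk : ∀ (μ : Fin T → Fin m → ℝ) (k : Fin T),
      0 ≤ μ k ⬝ᵥ (P.Theta T Srho (k : ℕ)).mulVec (μ k) := fun μ k =>
    quad_nonneg (theta_pd P T Srho hε hA hR hF hSrho k k.isLt).posSemidef _
  constructor
  · intro μ
    rw [hJ0]
    unfold LQData.Jmean
    have hsum : 0 ≤ ∑ k : Fin T, μ k ⬝ᵥ (P.Theta T Srho (k : ℕ)).mulVec (μ k) :=
      Finset.sum_nonneg fun k _ => hqk μ k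
    have := hq0 μ
    positivity
  · intro μ hμ
    rw [hJ0] at hμ
    unfold LQData.Jmean at hμ
    have hsum0 : ∑ k : Fin T, μ k ⬝ᵥ (P.Theta T Srho (k : ℕ)).mulVec (μ k) = 0 := by
      have h1 := hq0 μ
      have h2 : 0 ≤ ∑ k : Fin T, μ k ⬝ᵥ (P.Theta T Srho (k : ℕ)).mulVec (μ k) :=
        Finset.sum_nonneg fun k _ => hqk μ k
      nlinarith [hμ]
    have heach := (Finset.sum_eq_zero_iff_of_nonneg (fun k _ => hqk μ k)).1 hsum0
    funext k
    by_contra hne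
    have hpos : 0 < μ k ⬝ᵥ (P.Theta T Srho (k : ℕ)).mulVec (μ k) :=
      quad_pos (theta_pd P T Srho hε hA hR hF hSrho k k.isLt) (by
        intro h0
        exact hne (by simpa using h0))
    have hzero := heach k (Finset.mem_univ k)
    linarith
theorem jmean_min_zero {n m : ℕ} (hn : 1 ≤ n) (hm : 1 ≤ m) (T : ℕ) (hT : 1 ≤ T)
    (P : LQData n m) (hε : 0 < P.ε)
    (hA : ∀ k < T, IsUnit (P.A k))
    (hR : ∀ k < T, (P.R k).PosDef) (hSw : ∀ k < T, (P.Sw k).PosDef)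
    (hF : P.F.PosDef) (hSini : P.Sini.PosDef)
    (Srho : ℕ → Matrix (Fin m) (Fin m) ℝ) (hSrho : ∀ k < T, (Srho k).PosSemidef) :
    (∀ μ : Fin T → Fin m → ℝ, P.Jmean T Srho (fun _ => 0) ≤ P.Jmean T Srho μ) ∧
      (∀ μ : Fin T → Fin m → ℝ,
        P.Jmean T Srho μ = P.Jmean T Srho (fun _ => 0) → μ = fun _ => 0) := by
  exact jmean_min_zero' hn hm T hT P hε hA hR hSw hF hSini Srho hSrho
end
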